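/- Let ℓ be a nonnegative locally integrable function on (0,∞) and μ > 0. If ρ₁ is a solution on (0,∞) of the Volterra equation ρ₁(t) + μ ∫₀ᵗ ℓ(t−s) ρ₁(s) ds = 1 with 0 ≤ ρ₁ ≤ 1 and ρ₁ nonincreasing, then ρ₁(t) ≤ 1 / (1 + μ h_ℓ(t)), where h_ℓ(t) = ∫₀ᵗ ℓ. -/
import Mathlib


open MeasureTheory Set intervalIntegral

theorem stmt3 (ℓ ρ₁ : ℝ → ℝ) (μ : ℝ) (hμ : 0 < μ)
    (hℓint : LocallyIntegrableOn ℓ (Ioi 0))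
    (hℓ0 : ∀ t ∈ Ioi (0:ℝ), 0 ≤ ℓ t)
    (hρ0 : ∀ t, 0 ≤ ρ₁ t) (hρ1 : ∀ t, ρ₁ t ≤ 1)
    (hρmono : AntitoneOn ρ₁ (Ici 0))
    (hvolt : ∀ t > (0:ℝ), ρ₁ t + μ * ∫ s in (0:ℝ)..t, ℓ (t - s) * ρ₁ s = 1) :
    ∀ t > (0:ℝ), ρ₁ t ≤ 1 / (1 + μ * ∫ τ in (0:ℝ)..t, ℓ τ) := by
  intro t ht
  by_cases hI : IntervalIntegrable ℓ volume 0 t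
  · -- ℓ integrable on [0,t]
    set h : ℝ := ∫ τ in (0:ℝ)..t, ℓ τ with hh
    -- h ≥ 0
    have haenn : ∀ᵐ s ∂(volume.restrict (Ioc (0:ℝ) t)), 0 ≤ ℓ s := by
      filter_upwards [ae_restrict_mem measurableSet_Ioc] with s hs
      exact hℓ0 s hs.1
    have hnn : 0 ≤ h := by
      rw [hh, intervalIntegral.integral_of_le ht.le]
      exact setIntegral_nonneg_of_ae_restrict haenn
    have hpos : 0 < 1 + μ * h := by positivity
    -- integrability of s ↦ ℓ (t - s)
    have hIrefl : IntervalIntegrable (fun s => ℓ (t - s)) volume 0 t := by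
      simpa using (hI.comp_sub_left t).symm
    -- integrability of s ↦ ℓ (t - s) * ρ₁ s
    have hρmeas : AEMeasurable ρ₁ (volume.restrict (Ioc (0:ℝ) t)) := by
      exact aemeasurable_restrict_of_antitoneOn (μ := volume) measurableSet_Ioc
        (hρmono.mono (fun x hx => le_of_lt hx.1))
    have hIprod : IntervalIntegrable (fun s => ℓ (t - s) * ρ₁ s) volume 0 t := by
      rw [intervalIntegrable_iff_integrableOn_Ioc_of_le ht.le]
      have hrefl' : IntegrableOn (fun s => ℓ (t - s)) (Ioc 0 t) := by
        have := hIrefl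
        rwa [intervalIntegrable_iff_integrableOn_Ioc_of_le ht.le] at this
      refine hrefl'.mono' ?_ ?_
      · exact (hrefl'.aemeasurable.mul hρmeas).aestronglyMeasurable
      · have hne : ∀ᵐ s : ℝ, s ≠ t := by
          rw [ae_iff]; simpa using Real.volume_singleton (x := t)
        filter_upwards [ae_restrict_mem measurableSet_Ioc, ae_restrict_of_ae hne] with s hs hsne
        have hlt : 0 < t - s := sub_pos.2 (lt_of_le_of_ne hs.2 hsne)
        have h1 : 0 ≤ ℓ (t - s) := hℓ0 _ hlt
        rw [Real.norm_eq_abs, abs_mul, abs_of_nonneg h1, abs_of_nonneg (hρ0 s)]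
        nth_rewrite 2 [← mul_one (ℓ (t-s))]
        exact mul_le_mul_of_nonneg_left (hρ1 s) h1
    have hIconst : IntervalIntegrable (fun s => ℓ (t - s) * ρ₁ t) volume 0 t :=
      hIrefl.mul_const _
    -- monotonicity
    have hmono : (∫ s in (0:ℝ)..t, ℓ (t - s) * ρ₁ t) ≤ ∫ s in (0:ℝ)..t, ℓ (t - s) * ρ₁ s := by
      refine intervalIntegral.integral_mono_on ht.le hIconst hIprod ?_
      intro s hs
      rcases eq_or_lt_of_le hs.2 with heq | hlt
      · rw [heq]
      · exact mul_le_mul_of_nonneg_left (hρmono hs.1 ht.le hs.2)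
          (hℓ0 _ (mem_Ioi.2 (sub_pos.2 hlt)))
    -- compute the constant integral
    have hconst : (∫ s in (0:ℝ)..t, ℓ (t - s) * ρ₁ t) = h * ρ₁ t := by
      rw [intervalIntegral.integral_mul_const, hh]
      congr 1
      have := intervalIntegral.integral_comp_sub_left ℓ t (a := 0) (b := t)
      simpa using this
    have hv := hvolt t ht
    have key : ρ₁ t * (1 + μ * h) ≤ 1 := by
      have : h * ρ₁ t ≤ ∫ s in (0:ℝ)..t, ℓ (t - s) * ρ₁ s := hconst ▸ hmono
      nlinarith
    rw [le_div_iff₀ hpos]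
    exact key
  · -- ℓ not interval integrable: the integral is 0 and the bound is 1
    rw [intervalIntegral.integral_undef hI]
    simpa using hρ1 t
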